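/- Let 0 < a < b and n ≥ 1. Define h_i = √a · (i/n) + √b · ((n−i)/n), Γ_i = ab/(h_{i−1} h_i), g_i = ab/h_i², m_i = (μ−r)/(σ²Γ_i), and R(m, g) = (μ−r)mT − (1/2)m²σ²Tg − (μ−r)²T/(2σ²g). Let R* = −((μ−r)²T/(2σ²n²)) (1/√a − 1/√b)². Then for every i = 1, …, n: R(m_i, g_{i−1}) = R(m_i, g_i) = R*, and R(m_i, g) ≥ R* for every g ∈ [g_{i−1}, g_i]. Consequently, for every g ∈ [a,b] there exists i with R(m_i, g) ≥ R*. -/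

import Mathlib

set_option maxHeartbeats 1600000


/-- Equilibrium property of the robust `n`-element decision menu: on each group
`[g_{i−1}, g_i]` the regret of the menu item `m_i` equals the common value `R*`
at both boundaries and is at least `R*` everywhere in the group; hence every risk
type in `[a,b]` can secure regret at least `R*` from some menu item. -/
theorem stmt_15 (r μ σ T : ℝ) (hr : 0 < r) (hμ : r < μ) (hσ : 0 < σ) (hT : 0 < T)
    (a b : ℝ) (ha : 0 < a) (hab : a < b) (n : ℕ) (hn : 1 ≤ n)
    (h : ℕ → ℝ)
    (hh : ∀ i : ℕ, h i = Real.sqrt a * ((i : ℝ)/(n : ℝ)) +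
      Real.sqrt b * (((n : ℝ) - (i : ℝ))/(n : ℝ)))
    (Γ : ℕ → ℝ) (hΓ : ∀ i : ℕ, Γ i = a * b / (h (i-1) * h i))
    (g : ℕ → ℝ) (hg : ∀ i : ℕ, g i = a * b / (h i)^2)
    (m : ℕ → ℝ) (hm : ∀ i : ℕ, m i = (μ - r) / (σ^2 * Γ i))
    (R : ℝ → ℝ → ℝ)
    (hR : ∀ x y : ℝ, R x y =
      (μ - r) * x * T - (1/2) * x^2 * σ^2 * T * y - (μ - r)^2 * T / (2 * σ^2 * y))
    (Rstar : ℝ)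
    (hRstar : Rstar = -((μ - r)^2 * T / (2 * σ^2 * (n : ℝ)^2)) *
      (1 / Real.sqrt a - 1 / Real.sqrt b)^2) :
    (∀ i : ℕ, 1 ≤ i → i ≤ n →
      R (m i) (g (i-1)) = Rstar ∧ R (m i) (g i) = Rstar ∧
        ∀ x ∈ Set.Icc (g (i-1)) (g i), Rstar ≤ R (m i) x) ∧
    (∀ x ∈ Set.Icc a b, ∃ i : ℕ, 1 ≤ i ∧ i ≤ n ∧ Rstar ≤ R (m i) x) := by
  classical
  have hb : 0 < b := ha.trans hab
  set sa := Real.sqrt a with hsa_def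
  set sb := Real.sqrt b with hsb_def
  have hsa : 0 < sa := Real.sqrt_pos.mpr ha
  have hsb : 0 < sb := Real.sqrt_pos.mpr hb
  have hsa2 : sa ^ 2 = a := Real.sq_sqrt ha.le
  have hsb2 : sb ^ 2 = b := Real.sq_sqrt hb.le
  have hsab : sa < sb := Real.sqrt_lt_sqrt ha.le hab
  have hn0 : (0:ℝ) < (n:ℝ) := by exact_mod_cast Nat.pos_of_ne_zero (by omega)
  have hμr : 0 < μ - r := sub_pos.mpr hμ
  -- positivity of h on [0, n]
  have hhpos : ∀ j : ℕ, j ≤ n → 0 < h j := by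
    intro j hj
    have h1 : (j:ℝ) ≤ (n:ℝ) := by exact_mod_cast hj
    have h2 : (0:ℝ) ≤ (j:ℝ) := Nat.cast_nonneg j
    rw [hh]
    have hrw : sa * ((j:ℝ)/(n:ℝ)) + sb * (((n:ℝ) - (j:ℝ))/(n:ℝ))
        = (sa * (j:ℝ) + sb * ((n:ℝ) - (j:ℝ))) / (n:ℝ) := by ring
    rw [hrw]
    apply div_pos _ hn0
    nlinarith [mul_nonneg (sub_nonneg.2 hsab.le) (sub_nonneg.2 h1),
      mul_pos hsa hn0, mul_nonneg hsa.le h2]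
  -- Part 1
  have part1 : ∀ i : ℕ, 1 ≤ i → i ≤ n →
      R (m i) (g (i-1)) = Rstar ∧ R (m i) (g i) = Rstar ∧
        ∀ x ∈ Set.Icc (g (i-1)) (g i), Rstar ≤ R (m i) x := by
    intro i hi1 hin
    have hcast : ((i-1:ℕ):ℝ) = (i:ℝ) - 1 := by
      have := Nat.cast_sub (R := ℝ) hi1
      simpa using this
    have hp : 0 < h (i-1) := hhpos _ (by omega)
    have hq : 0 < h i := hhpos _ hin
    have hΓpos : 0 < Γ i := by rw [hΓ]; positivity
    have hgpos : 0 < g (i-1) := by rw [hg]; positivity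
    have hgpos' : 0 < g i := by rw [hg]; positivity
    have hpe : 0 < sa * (((i:ℝ)-1)/(n:ℝ)) + sb * (((n:ℝ) - ((i:ℝ)-1))/(n:ℝ)) := by
      have := hp
      rwa [hh, hcast] at this
    have hqe : 0 < sa * ((i:ℝ)/(n:ℝ)) + sb * (((n:ℝ) - (i:ℝ))/(n:ℝ)) := by
      have := hq
      rwa [hh] at this
    have hpq : h (i-1) = (h i * (n:ℝ) + (sb - sa))/(n:ℝ) := by
      rw [hh, hh, hcast]
      field_simp
      ring
    have hP : h i * (n:ℝ) + (sb - sa) ≠ 0 := by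
      have h1 : 0 < h i * (n:ℝ) := mul_pos hq hn0
      have h2 : 0 ≤ sb - sa := by linarith
      positivity
    have key : ∀ x : ℝ, x ≠ 0 → R (m i) x =
        Rstar - (μ - r)^2 * T / (2 * σ^2 * (Γ i)^2 * x) *
          ((x - g (i-1)) * (x - g i)) := by
      intro x hx
      rw [hR, hm, hΓ, hg, hg, hRstar, hpq, ← hsa2, ← hsb2]
      field_simp
      ring
    refine ⟨?_, ?_, ?_⟩
    · rw [key _ hgpos.ne']; ring
    · rw [key _ hgpos'.ne']; ring
    · rintro x ⟨hx1, hx2⟩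
      have hxpos : 0 < x := lt_of_lt_of_le hgpos hx1
      rw [key x hxpos.ne']
      have hprod : (x - g (i-1)) * (x - g i) ≤ 0 :=
        mul_nonpos_of_nonneg_of_nonpos (by linarith) (by linarith)
      have hC : 0 ≤ (μ - r)^2 * T / (2 * σ^2 * (Γ i)^2 * x) := by positivity
      nlinarith [mul_nonneg hC (neg_nonneg.2 hprod)]
  refine ⟨part1, ?_⟩
  -- Part 2
  have hh0 : h 0 = sb := by rw [hh]; field_simp; push_cast; ring
  have hhn : h n = sa := by rw [hh]; field_simp; ring
  have hg0 : g 0 = a := by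
    rw [hg, hh0, hsb2, mul_div_assoc, div_self hb.ne', mul_one]
  have hgn : g n = b := by
    rw [hg, hhn, hsa2]
    rw [mul_comm a b, mul_div_assoc, div_self ha.ne', mul_one]
  have hg01 : g 0 ≤ g 1 := by
    have hq1 : 0 < h 1 := hhpos 1 hn
    have hd : h 0 - h 1 = (sb - sa) / (n:ℝ) := by
      rw [hh, hh]
      push_cast
      field_simp
      ring
    have h10 : h 1 ≤ h 0 := by
      have : 0 ≤ (sb - sa) / (n:ℝ) := div_nonneg (by linarith) hn0.le
      linarith
    rw [hg 0, hg 1,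
      div_le_div_iff₀ (pow_pos (hhpos 0 (Nat.zero_le n)) 2) (pow_pos hq1 2)]
    have hsq : (h 1)^2 ≤ (h 0)^2 := pow_le_pow_left₀ hq1.le h10 2
    exact mul_le_mul_of_nonneg_left hsq (mul_pos ha hb).le
  rintro x ⟨hxa, hxb⟩
  have hex : ∃ k : ℕ, x ≤ g k := ⟨n, by rw [hgn]; exact hxb⟩
  set i := Nat.find hex with hi_def
  have hfi : x ≤ g i := Nat.find_spec hex
  have hi_le : i ≤ n := Nat.find_le (by rw [hgn]; exact hxb)
  by_cases h0 : i = 0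
  · refine ⟨1, le_rfl, hn, (part1 1 le_rfl hn).2.2 x ⟨?_, ?_⟩⟩
    · simpa [hg0] using hxa
    · have : x ≤ g 0 := by rw [← h0]; exact hfi
      calc x ≤ g 0 := this
        _ ≤ g 1 := hg01
  · have hi1 : 1 ≤ i := Nat.one_le_iff_ne_zero.mpr h0
    have hmin : ¬ x ≤ g (i-1) := Nat.find_min hex (by omega)
    exact ⟨i, hi1, hi_le, (part1 i hi1 hi_le).2.2 x ⟨le_of_not_ge hmin, hfi⟩⟩
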